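/- Let R be a field and N a positively graded R-module. The tensor algebra T(N) is graded commutative if and only if N = 0, or N is one-dimensional concentrated in a single degree n where n is even if char R ≠ 2 (n arbitrary positive if char R = 2). -/

import Mathlib

open TensorProduct

/-- The degree-`n` piece of the tensor algebra `T(N)` for the grading induced by a grading
`𝒩` on `N`: the span of the products `ι x₁ * ⋯ * ι xₖ` with `xⱼ` homogeneous of degrees
summing to `n`. -/
def gradePiece (R N : Type*) [CommRing R] [AddCommGroup N] [Module R N]
    (𝒩 : ℕ → Submodule R N) (n : ℕ) : Submodule R (TensorAlgebra R N) :=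
  Submodule.span R {w | ∃ l : List (N × ℕ), (∀ p ∈ l, p.1 ∈ 𝒩 p.2) ∧
    (l.map Prod.snd).sum = n ∧ w = (l.map fun p => TensorAlgebra.ι R p.1).prod}

/-- The tensor algebra `T(N)` on a graded module `(N, 𝒩)` is graded commutative:
`a * b = (-1)^(pq) • (b * a)` for homogeneous `a`, `b` of degrees `p`, `q`. -/
def TAGradedComm (R N : Type*) [CommRing R] [AddCommGroup N] [Module R N]
    (𝒩 : ℕ → Submodule R N) : Prop :=
  ∀ p q : ℕ, ∀ a ∈ gradePiece R N 𝒩 p, ∀ b ∈ gradePiece R N 𝒩 q,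
    a * b = ((-1 : R) ^ (p * q)) • (b * a)


section Helpers

variable {R N : Type*} [Field R] [AddCommGroup N] [Module R N]

lemma exists_dual_of_indep {s : Set N} (hs : LinearIndependent R ((↑) : s → N))
    {x : N} (hx : x ∈ s) : ∃ φ : N →ₗ[R] R, φ x = 1 ∧ ∀ y ∈ s, y ≠ x → φ y = 0 := by
  classical
  replace hs : LinearIndepOn R id s := hs
  let B := Module.Basis.extend hs
  have hxe : x ∈ hs.extend (Set.subset_univ s) := hs.subset_extend _ hx
  have h1 : B.repr x = Finsupp.single ⟨x, hxe⟩ 1 := by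
    have := B.repr_self ⟨x, hxe⟩
    rwa [Module.Basis.extend_apply_self] at this
  refine ⟨B.coord ⟨x, hxe⟩, ?_, ?_⟩
  · rw [Module.Basis.coord_apply, h1, Finsupp.single_eq_same]
  · intro y hy hne
    have hye : y ∈ hs.extend (Set.subset_univ s) := hs.subset_extend _ hy
    have h2 : B.repr y = Finsupp.single ⟨y, hye⟩ 1 := by
      have := B.repr_self ⟨y, hye⟩
      rwa [Module.Basis.extend_apply_self] at this
    rw [Module.Basis.coord_apply, h2, Finsupp.single_apply]
    simp [Subtype.ext_iff, hne]

lemma exists_dual_pair {x y : N} (hli : LinearIndependent R ![x, y]) :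
    ∃ φ ψ : N →ₗ[R] R, φ x = 1 ∧ φ y = 0 ∧ ψ x = 0 ∧ ψ y = 1 := by
  have hs : LinearIndependent R ((↑) : Set.range ![x, y] → N) := (linearIndepOn_id_range_iff hli.injective).mpr hli
  have hxm : x ∈ Set.range ![x, y] := ⟨0, rfl⟩
  have hym : y ∈ Set.range ![x, y] := ⟨1, rfl⟩
  have hne : x ≠ y := by
    intro h
    have := hli.injective (R := R)
    have h01 : (![x, y] : Fin 2 → N) 0 = ![x, y] 1 := by simp [h]
    exact absurd (this h01) (by decide)
  obtain ⟨φ, hφ1, hφ0⟩ := exists_dual_of_indep hs hxm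
  obtain ⟨ψ, hψ1, hψ0⟩ := exists_dual_of_indep hs hym
  exact ⟨φ, ψ, hφ1, hφ0 y hym hne.symm, hψ0 x hxm hne, hψ1⟩

lemma tensor_noncomm {x y : N} (hli : LinearIndependent R ![x, y]) (c : R) :
    TensorAlgebra.ι R x * TensorAlgebra.ι R y ≠ c • (TensorAlgebra.ι R y * TensorAlgebra.ι R x) := by
  obtain ⟨φ, ψ, hφx, hφy, hψx, hψy⟩ := exists_dual_pair hli
  intro h
  let E01 : Matrix (Fin 2) (Fin 2) R := Matrix.single 0 1 1
  let E10 : Matrix (Fin 2) (Fin 2) R := Matrix.single 1 0 1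
  let f : N →ₗ[R] Matrix (Fin 2) (Fin 2) R := φ.smulRight E01 + ψ.smulRight E10
  let F := TensorAlgebra.lift R f
  have hFx : F (TensorAlgebra.ι R x) = E01 := by
    simp [F, f, TensorAlgebra.lift_ι_apply, hφx, hψx]
  have hFy : F (TensorAlgebra.ι R y) = E10 := by
    simp [F, f, TensorAlgebra.lift_ι_apply, hφy, hψy]
  have := congrArg F h
  rw [map_mul, map_smul, map_mul, hFx, hFy] at this
  have h2 : (Matrix.single 0 0 1 : Matrix (Fin 2) (Fin 2) R)
      = c • Matrix.single 1 1 1 := by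
    simpa [E01, E10, Matrix.single_mul_single_same] using this
  have := congrFun (congrFun h2 0) 0
  simp [Matrix.single_apply_same, Matrix.single_apply_of_ne] at this

lemma tensor_sq_smul {x : N} (hx : x ≠ 0) (c : R)
    (h : TensorAlgebra.ι R x * TensorAlgebra.ι R x
        = c • (TensorAlgebra.ι R x * TensorAlgebra.ι R x)) : c = 1 := by
  have hs : LinearIndependent R ((↑) : ({x} : Set N) → N) := by
    haveI : Unique (({x} : Set N)) := Set.uniqueSingleton x
    exact LinearIndepOn.singleton (v := id) (by
      have : ((default : ({x} : Set N)) : N) = x := (default : ({x} : Set N)).property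
      simpa [this] using hx)
  obtain ⟨φ, hφ1, -⟩ := exists_dual_of_indep hs (Set.mem_singleton x)
  let f : N →ₗ[R] Polynomial R := φ.smulRight Polynomial.X
  let F := TensorAlgebra.lift R f
  have hFx : F (TensorAlgebra.ι R x) = Polynomial.X := by
    simp [F, f, TensorAlgebra.lift_ι_apply, hφ1]
  have := congrArg F h
  rw [map_mul, map_smul, map_mul, hFx] at this
  have h2 := congrArg (Polynomial.coeff · 2) this
  simpa [← Polynomial.C_eq_natCast, Polynomial.coeff_smul, ← sq, Polynomial.coeff_X_pow] using h2.symm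

lemma ι_mem_gradePiece {𝒩 : ℕ → Submodule R N} {p : ℕ} {x : N} (hx : x ∈ 𝒩 p) :
    TensorAlgebra.ι R x ∈ gradePiece R N 𝒩 p :=
  Submodule.subset_span ⟨[(x, p)], by simpa using hx, by simp, by simp⟩

theorem taGradedComm_fwd (𝒩 : ℕ → Submodule R N) (hint : DirectSum.IsInternal 𝒩)
    (h0 : 𝒩 0 = ⊥) (H : TAGradedComm R N 𝒩) :
    (Subsingleton N ∨
      ∃ n : ℕ, 0 < n ∧ 𝒩 n = ⊤ ∧ Module.finrank R N = 1 ∧ ((2 : R) ≠ 0 → Even n)) := by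
  by_cases hsub : Subsingleton N
  · exact Or.inl hsub
  right
  rw [not_subsingleton_iff_nontrivial] at hsub
  have htop := hint.submodule_iSup_eq_top
  have hex : ∃ n x, x ∈ 𝒩 n ∧ x ≠ 0 := by
    by_contra hc
    push_neg at hc
    have hbot : ∀ n, 𝒩 n = ⊥ := fun n =>
      (Submodule.eq_bot_iff _).mpr fun y hy => hc n y hy
    have : (⊤ : Submodule R N) = ⊥ := by rw [← htop]; simp [hbot]
    exact absurd this top_ne_bot
  obtain ⟨n, x, hxn, hx0⟩ := hex
  have hn0 : n ≠ 0 := fun h => hx0 (by rw [h, h0] at hxn; simpa using hxn)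
  have key : ∀ q y, y ∈ 𝒩 q → y ∈ Submodule.span R {x} := by
    intro q y hyq
    by_contra hy
    have hyne : y ≠ 0 := fun h => hy (h ▸ Submodule.zero_mem _)
    have hli : LinearIndependent R ![x, y] := by
      rw [linearIndependent_fin2]
      refine ⟨by simpa using hyne, fun a ha => ?_⟩
      simp only [Matrix.cons_val_one, Matrix.head_cons, Matrix.cons_val_zero] at ha
      have ha0 : a ≠ 0 := fun h => hx0 (by rw [← ha, h, zero_smul])
      exact hy (Submodule.mem_span_singleton.mpr
        ⟨a⁻¹, by rw [← ha, smul_smul, inv_mul_cancel₀ ha0, one_smul]⟩)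
    exact tensor_noncomm hli _ (H n q _ (ι_mem_gradePiece hxn) _ (ι_mem_gradePiece hyq))
  have hspan : Submodule.span R {x} = ⊤ := by
    rw [← top_le_iff, ← htop]
    exact iSup_le fun q y hy => key q y hy
  refine ⟨n, Nat.pos_of_ne_zero hn0, ?_, ?_, ?_⟩
  · rw [eq_top_iff, ← hspan]
    exact Submodule.span_le.mpr (by simpa using hxn)
  · exact finrank_eq_one x hx0 fun w => Submodule.mem_span_singleton.mp (hspan ▸ Submodule.mem_top)
  · intro h2
    by_contra hodd
    have hoddn : Odd (n * n) :=
      (Nat.not_even_iff_odd.mp hodd).mul (Nat.not_even_iff_odd.mp hodd)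
    have hc := H n n _ (ι_mem_gradePiece hxn) _ (ι_mem_gradePiece hxn)
    have h1 := tensor_sq_smul hx0 _ hc
    rw [Odd.neg_one_pow hoddn] at h1
    exact h2 (by linear_combination -h1)

theorem taGradedComm_bwd_subsingleton (𝒩 : ℕ → Submodule R N) (hs : Subsingleton N) :
    TAGradedComm R N 𝒩 := by
  have hle : ∀ p, gradePiece R N 𝒩 p ≤
      (if p = 0 then Submodule.span R {(1 : TensorAlgebra R N)} else ⊥) := by
    intro p
    rw [gradePiece, Submodule.span_le]
    rintro w ⟨l, hl, hsum, rfl⟩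
    match l with
    | [] =>
      simp only [List.map_nil, List.sum_nil] at hsum
      simp [← hsum, Submodule.mem_span_singleton]
    | h :: t =>
      have h1 : h.1 = 0 := Subsingleton.elim _ _
      have : (((h :: t).map fun p => TensorAlgebra.ι R p.1).prod) = 0 := by
        simp [h1]
      rw [this]
      split <;> simp
  intro p q a ha b hb
  by_cases hp : p = 0
  · subst hp
    have := hle 0 ha
    rw [if_pos rfl] at this
    obtain ⟨r, rfl⟩ := Submodule.mem_span_singleton.mp this
    simp [smul_mul_assoc, mul_smul_comm]
  · have := hle p ha
    rw [if_neg hp] at this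
    have : a = 0 := by simpa using this
    simp [this]

theorem taGradedComm_bwd_onedim (𝒩 : ℕ → Submodule R N) (hint : DirectSum.IsInternal 𝒩)
    (n : ℕ) (hn : 0 < n) (hNn : 𝒩 n = ⊤) (hfr : Module.finrank R N = 1)
    (hsig : (2 : R) ≠ 0 → Even n) : TAGradedComm R N 𝒩 := by
  obtain ⟨x₀, hx₀, hall⟩ := finrank_eq_one_iff'.mp hfr
  set μ := TensorAlgebra.ι R x₀ with hμ
  have hbot : ∀ m, m ≠ n → 𝒩 m = ⊥ := by
    intro m hm
    have hdisj := hint.submodule_iSupIndep m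
    have hle : (⊤ : Submodule R N) ≤ ⨆ j, ⨆ (_ : j ≠ m), 𝒩 j := by
      rw [← hNn]
      exact le_iSup₂ (f := fun j (_ : j ≠ m) => 𝒩 j) n (Ne.symm hm)
    rw [top_le_iff.mp hle] at hdisj
    exact disjoint_top.mp hdisj
  have prod_mem : ∀ l : List N,
      ((l.map (TensorAlgebra.ι R)).prod) ∈ Submodule.span R {μ ^ l.length} := by
    intro l
    induction l with
    | nil => simpa using Submodule.mem_span_singleton.mpr ⟨1, by simp⟩
    | cons v t ih =>
      obtain ⟨c, hc⟩ := hall v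
      obtain ⟨r, hr⟩ := Submodule.mem_span_singleton.mp ih
      refine Submodule.mem_span_singleton.mpr ⟨c * r, ?_⟩
      simp only [List.map_cons, List.prod_cons, List.length_cons]
      rw [← hc, ← hr, map_smul]
      rw [smul_mul_smul_comm, pow_succ']
  have hle : ∀ p, gradePiece R N 𝒩 p ≤
      (if n ∣ p then Submodule.span R {μ ^ (p / n)} else ⊥) := by
    intro p
    rw [gradePiece, Submodule.span_le]
    rintro w ⟨l, hl, hsum, rfl⟩
    by_cases hd : ∀ pr ∈ l, pr.2 = n
    · have hlen : (l.map Prod.snd).sum = l.length * n := by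
        rw [List.sum_eq_card_nsmul (l.map Prod.snd) n ?_]
        · simp [mul_comm]
        · intro x hx
          obtain ⟨pr, hpr, rfl⟩ := List.mem_map.mp hx
          exact hd pr hpr
      have hdvd : n ∣ p := ⟨l.length, by rw [← hsum, hlen, mul_comm]⟩
      have hquot : p / n = l.length := by
        rw [← hsum, hlen, Nat.mul_div_cancel _ hn]
      rw [if_pos hdvd, hquot]
      have : (l.map fun pr => TensorAlgebra.ι R pr.1).prod
          = ((l.map Prod.fst).map (TensorAlgebra.ι R)).prod := by
        rw [List.map_map]; rfl
      rw [this]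
      simpa using prod_mem (l.map Prod.fst)
    · push_neg at hd
      obtain ⟨pr, hpr, hne⟩ := hd
      have : pr.1 = 0 := by
        have := hl pr hpr
        rw [hbot pr.2 hne] at this
        simpa using this
      have hz : (l.map fun pr => TensorAlgebra.ι R pr.1).prod = 0 := by
        apply List.prod_eq_zero
        exact List.mem_map.mpr ⟨pr, hpr, by rw [this, map_zero]⟩
      rw [hz]
      split <;> simp
  intro p q a ha b hb
  by_cases hp : n ∣ p
  · by_cases hq : n ∣ q
    · have hap := hle p ha
      rw [if_pos hp] at hap
      obtain ⟨r, rfl⟩ := Submodule.mem_span_singleton.mp hap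
      have hbq := hle q hb
      rw [if_pos hq] at hbq
      obtain ⟨s, rfl⟩ := Submodule.mem_span_singleton.mp hbq
      have hsign : ((-1 : R) ^ (p * q)) = 1 := by
        by_cases h2 : (2 : R) = 0
        · have : (-1 : R) = 1 := by linear_combination -h2
          rw [this, one_pow]
        · have hev : Even n := hsig h2
          have hevp : Even p := (even_iff_two_dvd.mpr ((even_iff_two_dvd.mp hev).trans hp))
          exact (hevp.mul_right q).neg_one_pow
      rw [hsign, one_smul, smul_mul_smul_comm, smul_mul_smul_comm,
        mul_comm r s, pow_mul_comm]
    · have := hle q hb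
      rw [if_neg hq] at this
      have : b = 0 := by simpa using this
      simp [this]
  · have := hle p ha
    rw [if_neg hp] at this
    have : a = 0 := by simpa using this
    simp [this]

end Helpers

/-- Over a field, `T(N)` is graded commutative iff `N = 0` or `N` is one-dimensional,
concentrated in a single degree `n > 0` which is even when `char R ≠ 2`. -/
theorem tensorAlgebra_gradedComm_iff_of_field
    (R N : Type*) [Field R] [AddCommGroup N] [Module R N]
    (𝒩 : ℕ → Submodule R N) (hint : DirectSum.IsInternal 𝒩) (h0 : 𝒩 0 = ⊥) :
    TAGradedComm R N 𝒩 ↔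
      (Subsingleton N ∨
        ∃ n : ℕ, 0 < n ∧ 𝒩 n = ⊤ ∧ Module.finrank R N = 1 ∧ ((2 : R) ≠ 0 → Even n)) := by
  constructor
  · exact taGradedComm_fwd 𝒩 hint h0
  · rintro (hs | ⟨n, hn, hNn, hfr, hsig⟩)
    · exact taGradedComm_bwd_subsingleton 𝒩 hs
    · exact taGradedComm_bwd_onedim 𝒩 hint n hn hNn hfr hsig
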